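/- Let (Ω, 𝓔) be a measurable space, H a separable complex Hilbert space, and T : Ω → (H →ₗ.[ℂ] H) a random closed operator. Then every T ω is bounded (i.e. there exists C ω with ‖T ω f‖ ≤ C ω • ‖f‖ for all f ∈ dom(T ω)) if and only if every domain dom(T ω) is a closed subspace of H; and in that case the domain map ω ↦ dom(T ω) is a random closed subspace, i.e. {ω | (dom(T ω) ∩ U).Nonempty} is measurable for every open U ⊆ H and each dom(T ω) is closed. -/

import Mathlib

/-- For a random closed operator: every `T ω` is bounded iff every domain
`dom (T ω)` is closed, and in that case the domain map is a random closed
subspace. -/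
theorem random_closed_operator_bounded_iff_domain_closed
    {Ω : Type*} [MeasurableSpace Ω]
    {H : Type*} [NormedAddCommGroup H] [InnerProductSpace ℂ H] [CompleteSpace H]
    [SecondCountableTopology H]
    (T : Ω → (H →ₗ.[ℂ] H))
    (hclosed : ∀ ω, IsClosed ((T ω).graph : Set (H × H)))
    (hrandom : ∀ V : Set (H × H), IsOpen V →
      MeasurableSet {ω : Ω | (((T ω).graph : Set (H × H)) ∩ V).Nonempty}) :
    ((∀ ω, ∃ C : ℝ, 0 ≤ C ∧ ∀ f : (T ω).domain, ‖T ω f‖ ≤ C * ‖(f : H)‖) ↔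
      (∀ ω, IsClosed (((T ω).domain : Set H)))) ∧
    ((∀ ω, IsClosed (((T ω).domain : Set H))) →
      ∀ U : Set H, IsOpen U →
        MeasurableSet {ω : Ω | (((T ω).domain : Set H) ∩ U).Nonempty}) := by
  constructor
  · constructor
    · -- bounded ⇒ domain closed
      intro hb ω
      obtain ⟨C, hC0, hC⟩ := hb ω
      apply isClosed_of_closure_subset
      intro x hx
      obtain ⟨u, hu_mem, hu_tend⟩ := mem_closure_iff_seq_limit.mp hx
      set v : ℕ → (T ω).domain := fun n => ⟨u n, hu_mem n⟩ with hv_def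
      have hu_cauchy : CauchySeq u := hu_tend.cauchySeq
      have hv_cauchy : CauchySeq v := by
        rw [Metric.cauchySeq_iff] at hu_cauchy ⊢
        simpa [Subtype.dist_eq] using hu_cauchy
      have lip : LipschitzWith (Real.toNNReal C) (fun a : (T ω).domain => T ω a) := by
        apply LipschitzWith.of_dist_le_mul
        intro a b
        rw [dist_eq_norm, ← (T ω).map_sub]
        calc ‖T ω (a - b)‖ ≤ C * ‖((a - b : (T ω).domain) : H)‖ := hC _
          _ = (Real.toNNReal C : ℝ) * dist a b := by
              rw [Real.coe_toNNReal C hC0, Subtype.dist_eq, dist_eq_norm]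
              rfl
      have hg_cauchy : CauchySeq (fun n => T ω (v n)) :=
        lip.uniformContinuous.comp_cauchySeq hv_cauchy
      obtain ⟨y, hy⟩ := cauchySeq_tendsto_of_complete hg_cauchy
      have htend : Filter.Tendsto (fun n => (u n, T ω (v n))) Filter.atTop (nhds (x, y)) :=
        hu_tend.prodMk_nhds hy
      have hmem : ∀ n, (u n, T ω (v n)) ∈ ((T ω).graph : Set (H × H)) := fun n =>
        (T ω).mem_graph (v n)
      have : (x, y) ∈ ((T ω).graph : Set (H × H)) :=
        (hclosed ω).mem_of_tendsto htend (Filter.Eventually.of_forall hmem)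
      exact LinearPMap.mem_domain_of_mem_graph this
    · -- domain closed ⇒ bounded
      intro hd ω
      haveI : CompleteSpace ((T ω).domain) := (hd ω).completeSpace_coe
      set g : (T ω).domain →ₗ[ℂ] H := (T ω).toFun with hg_def
      have hgraph : (g.graph : Set ((T ω).domain × H)) =
          (fun p : (T ω).domain × H => ((p.1 : H), p.2)) ⁻¹'
            ((T ω).graph : Set (H × H)) := by
        ext ⟨a, b⟩
        simp only [SetLike.mem_coe, LinearMap.mem_graph_iff, Set.mem_preimage]
        constructor
        · rintro rfl
          exact (T ω).mem_graph a
        · intro h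
          have := ((T ω).image_iff a.2).mpr h
          exact this
      have hgc : IsClosed (g.graph : Set ((T ω).domain × H)) := by
        rw [hgraph]
        exact (hclosed ω).preimage
          ((continuous_subtype_val.comp continuous_fst).prodMk continuous_snd)
      have hcont : Continuous g := g.continuous_of_isClosed_graph hgc
      set G : (T ω).domain →L[ℂ] H := ⟨g, hcont⟩ with hG_def
      refine ⟨‖G‖, G.opNorm_nonneg, fun f => ?_⟩
      have := G.le_opNorm f
      exact this
  · -- measurability of the domain map
    intro _hd U hU
    have key : {ω : Ω | (((T ω).domain : Set H) ∩ U).Nonempty} =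
        {ω : Ω | (((T ω).graph : Set (H × H)) ∩ (U ×ˢ Set.univ)).Nonempty} := by
      ext ω
      constructor
      · rintro ⟨x, hxd, hxU⟩
        exact ⟨(x, T ω ⟨x, hxd⟩), (T ω).mem_graph ⟨x, hxd⟩, hxU, trivial⟩
      · rintro ⟨⟨a, b⟩, hg, haU, -⟩
        exact ⟨a, LinearPMap.mem_domain_of_mem_graph hg, haU⟩
    rw [key]
    exact hrandom _ (hU.prod isOpen_univ)
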